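/- If κ := 1 + β - α > 0, where α, β > 0, then the series ∑_{r=0}^∞ Γ(αr + a)/Γ(βr + b) · z^r/r! converges absolutely for every complex z (assuming αr + a is never a nonpositive integer). -/

import Mathlib

open Complex Set Filter MeasureTheory

lemma my_norm_Gamma_le {s : ℂ} (hs : 0 < s.re) : ‖Complex.Gamma s‖ ≤ Real.Gamma s.re := by
  rw [Complex.Gamma_eq_integral hs, Complex.GammaIntegral,
    Real.Gamma_eq_integral hs]
  refine (norm_integral_le_integral_norm _).trans (le_of_eq ?_)
  refine setIntegral_congr_fun measurableSet_Ioi fun x hx => ?_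
  rw [norm_mul, Complex.norm_real, Real.norm_eq_abs,
    _root_.abs_of_nonneg (Real.exp_pos _).le, Complex.norm_cpow_eq_rpow_re_of_pos hx]
  simp

lemma my_Gamma_le_one {x : ℝ} (h1 : 1 ≤ x) (h2 : x ≤ 2) : Real.Gamma x ≤ 1 := by
  have hc := Real.convexOn_Gamma.2 (mem_Ioi.2 one_pos) (mem_Ioi.2 two_pos)
    (show (0:ℝ) ≤ 2 - x by linarith) (show (0:ℝ) ≤ x - 1 by linarith)
    (show (2 - x) + (x - 1) = 1 by ring)
  simp only [smul_eq_mul] at hc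
  rw [Real.Gamma_one, Real.Gamma_two] at hc
  have hx : (2-x) * 1 + (x-1) * 2 = x := by ring
  rw [hx] at hc
  linarith

lemma my_Gamma_le_fact : ∀ n : ℕ, ∀ x : ℝ, 1 ≤ x → x < n + 1 → Real.Gamma x ≤ (Nat.factorial n : ℝ) := by
  intro n
  induction n with
  | zero => intro x h1 h2; exfalso; push_cast at h2; linarith
  | succ n ih =>
    intro x h1 h2
    rcases Nat.eq_zero_or_pos n with rfl | hn
    · simpa using my_Gamma_le_one h1 (by push_cast at h2; linarith)
    rcases lt_or_ge x (n+1) with h | h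
    · calc Real.Gamma x ≤ (Nat.factorial n : ℝ) := ih x h1 h
        _ ≤ ((n+1).factorial : ℝ) := by exact_mod_cast Nat.factorial_le (Nat.le_succ n)
    · have hn1 : (1:ℝ) ≤ n := by exact_mod_cast hn
      have hx1 : (1:ℝ) ≤ x - 1 := by linarith
      have heq : Real.Gamma x = (x-1) * Real.Gamma (x-1) := by
        have := Real.Gamma_add_one (s := x - 1) (by linarith)
        simpa using this
      have hih : Real.Gamma (x-1) ≤ (Nat.factorial n : ℝ) := by
        apply ih _ hx1; push_cast at h2 ⊢; linarith
      rw [heq]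
      have hle : x - 1 ≤ (n:ℝ) + 1 := by push_cast at h2; linarith
      calc (x-1) * Real.Gamma (x-1) ≤ ((n:ℝ)+1) * (Nat.factorial n : ℝ) :=
            mul_le_mul hle hih (Real.Gamma_nonneg_of_nonneg (by linarith)) (by positivity)
        _ = ((n+1).factorial : ℝ) := by rw [Nat.factorial_succ]; push_cast; ring

lemma my_ne_neg_nat' {s : ℂ} (hs : 0 < s.re) : ∀ m : ℕ, s ≠ -(m:ℂ) := by
  intro m h
  rw [h] at hs
  simp at hs
  have : (0:ℝ) ≤ (m:ℝ) := by positivity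
  linarith

lemma my_Gamma_shift (w : ℂ) (hw : 0 < w.re) (n : ℕ) :
    Complex.Gamma (w + n) = (∏ j ∈ Finset.range n, (w + j)) * Complex.Gamma w := by
  induction n with
  | zero => simp
  | succ n ih =>
    have hne : w + n ≠ 0 := by
      intro h
      have h1 : w.re + n = 0 := by
        have := congrArg Complex.re h; simpa using this
      have h2 : (0:ℝ) ≤ (n:ℝ) := by positivity
      linarith
    have h3 : Complex.Gamma (w + n + 1) = (w + n) * Complex.Gamma (w + n) :=
      Complex.Gamma_add_one _ hne
    rw [show (w + (n+1:ℕ) : ℂ) = w + n + 1 by push_cast; ring, h3, ih,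
      Finset.prod_range_succ]
    ring

lemma my_Gamma_lower (w : ℂ) (hw : 1 ≤ w.re) (n : ℕ) :
    (Nat.factorial n : ℝ) * ‖Complex.Gamma w‖ ≤ ‖Complex.Gamma (w + n)‖ := by
  rw [my_Gamma_shift w (by linarith) n, norm_mul, norm_prod]
  apply mul_le_mul_of_nonneg_right _ (norm_nonneg _)
  calc (Nat.factorial n : ℝ) = ∏ j ∈ Finset.range n, ((j:ℝ) + 1) := by
        induction n with
        | zero => simp
        | succ n ih => rw [Finset.prod_range_succ, ← ih, Nat.factorial_succ]; push_cast; ring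
    _ ≤ ∏ j ∈ Finset.range n, ‖w + (j:ℂ)‖ := by
        apply Finset.prod_le_prod
        · intro j _; positivity
        · intro j _
          calc (j:ℝ) + 1 ≤ (w + j).re := by simp; linarith
            _ ≤ ‖w + (j:ℂ)‖ := Complex.re_le_norm _

lemma my_Gamma_min (y : ℝ) : ∃ c > 0, ∀ w : ℂ, w.im = y → 1 ≤ w.re → w.re ≤ 2 →
    c ≤ ‖Complex.Gamma w‖ := by
  set g : ℝ → ℝ := fun t => ‖Complex.Gamma (t + y * Complex.I)‖ with hg
  have hcont : ContinuousOn g (Icc 1 2) := by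
    intro t ht
    apply ContinuousAt.continuousWithinAt
    have h1 : ContinuousAt (fun t : ℝ => (t : ℂ) + y * Complex.I) t := by fun_prop
    have hre : ((t:ℂ) + y * Complex.I).re = t := by simp
    have h2 : ContinuousAt Complex.Gamma ((t:ℂ) + y * Complex.I) := by
      apply (Complex.differentiableAt_Gamma _ ?_).continuousAt
      apply my_ne_neg_nat'
      rw [hre]; linarith [ht.1]
    have h3 : ContinuousAt (fun t : ℝ => Complex.Gamma ((t:ℂ) + ↑y * Complex.I)) t :=
      ContinuousAt.comp (x := t) h2 h1
    exact h3.norm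
  obtain ⟨t0, ht0, hmin⟩ := isCompact_Icc.exists_isMinOn (nonempty_Icc.2 one_le_two) hcont
  refine ⟨g t0, ?_, ?_⟩
  · have hne : Complex.Gamma (↑t0 + ↑y * Complex.I) ≠ 0 := by
      apply Complex.Gamma_ne_zero; apply my_ne_neg_nat'; simp; linarith [ht0.1]
    simpa only [hg] using norm_pos_iff.2 hne
  · intro w him h1 h2
    have := hmin (show w.re ∈ Icc (1:ℝ) 2 from ⟨h1, h2⟩)
    simp only [hg, Set.mem_setOf_eq] at this ⊢
    rwa [show ((w.re:ℂ) + ↑y * Complex.I) = w by rw [← him, Complex.re_add_im]] at this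

lemma my_fact_mul_pow_le (m k : ℕ) : m.factorial * (m+1)^k ≤ (m+k).factorial := by
  induction k with
  | zero => simp
  | succ k ih =>
    calc m.factorial * (m+1)^(k+1) = m.factorial * (m+1)^k * (m+1) := by ring
      _ ≤ (m+k).factorial * (m+1) := Nat.mul_le_mul_right _ ih
      _ ≤ (m+k).factorial * (m+k+1) := Nat.mul_le_mul_left _ (by omega)
      _ = (m+(k+1)).factorial := by rw [show m+(k+1) = (m+k)+1 by ring, Nat.factorial_succ]; ring

lemma my_fact_add_le (m k : ℕ) : (m+k).factorial ≤ 2^(m+k) * m.factorial * k.factorial := by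
  have h1 : (m+k).choose m * m.factorial * k.factorial = (m+k).factorial := by
    have := Nat.choose_mul_factorial_mul_factorial (Nat.le_add_right m k)
    simpa using this
  have h2 : (m+k).choose m ≤ 2^(m+k) := by
    calc (m+k).choose m ≤ ∑ i ∈ Finset.range (m+k+1), (m+k).choose i :=
          Finset.single_le_sum (fun i _ => Nat.zero_le _) (by simp)
      _ = 2^(m+k) := Nat.sum_range_choose (m+k)
  calc (m+k).factorial = (m+k).choose m * m.factorial * k.factorial := h1.symm
    _ ≤ 2^(m+k) * m.factorial * k.factorial :=
        Nat.mul_le_mul_right _ (Nat.mul_le_mul_right _ h2)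

set_option maxHeartbeats 1000000 in
/-- If `κ = 1 + β - α > 0` with `α, β > 0`, then the Wright series
`∑ Γ(αr+a)/Γ(βr+b) zʳ/r!` converges absolutely for every complex `z`
(assuming `αr + a` is never a nonpositive integer). -/
theorem wright_summable_of_kappa_pos (α β : ℝ) (a b : ℂ)
    (hα : 0 < α) (hβ : 0 < β) (hκ : 0 < 1 + β - α)
    (ha : ∀ r k : ℕ, (α * r : ℂ) + a ≠ -(k : ℂ)) :
    ∀ z : ℂ, Summable (fun r : ℕ =>
      ‖Complex.Gamma ((α * r : ℝ) + a) / Complex.Gamma ((β * r : ℝ) + b) *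
        z ^ r / (Nat.factorial r)‖) := by
  intro z
  set x : ℝ := ‖z‖ with hxdef
  have hx0 : 0 ≤ x := norm_nonneg z
  obtain ⟨c, hc, hcmin⟩ := my_Gamma_min b.im
  have hk2 : 0 < (1+β-α)/2 := by linarith
  -- eventual conditions
  have hr : Tendsto (fun r : ℕ => (r:ℝ)) atTop atTop := tendsto_natCast_atTop_atTop
  have hq : Tendsto (fun r : ℕ => α * r + a.re) atTop atTop :=
    tendsto_atTop_add_const_right _ _ (hr.const_mul_atTop hα)
  have ht : Tendsto (fun r : ℕ => β * r + b.re) atTop atTop :=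
    tendsto_atTop_add_const_right _ _ (hr.const_mul_atTop hβ)
  have h3 : Tendsto (fun r : ℕ => ((1+β-α)/2) * r) atTop atTop := hr.const_mul_atTop hk2
  have h5 : Tendsto (fun r : ℕ => (α * r + a.re) ^ ((1+β-α)/2)) atTop atTop :=
    (tendsto_rpow_atTop hk2).comp hq
  have hev : ∀ᶠ r : ℕ in atTop, (1 ≤ α*r + a.re) ∧ (2 ≤ β*r + b.re) ∧
      (a.re - b.re + 2 ≤ ((1+β-α)/2) * r) ∧
      (2*(x+1)*(2:ℝ)^(β+1:ℝ) ≤ (α*r + a.re) ^ ((1+β-α)/2)) :=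
    (hq.eventually_ge_atTop 1).and <| (ht.eventually_ge_atTop 2).and <|
      (h3.eventually_ge_atTop _).and (h5.eventually_ge_atTop _)
  obtain ⟨R, hR⟩ := eventually_atTop.1 hev
  -- key pointwise bound
  have key : ∀ r : ℕ, R ≤ r →
      ‖Complex.Gamma ((α * r : ℝ) + a) / Complex.Gamma ((β * r : ℝ) + b) *
        z ^ r / (Nat.factorial r)‖ ≤ (2:ℝ)^(b.re) / c * (1/2)^r := by
    intro r hrR
    obtain ⟨C1, C2, C3, C5⟩ := hR r hrR
    set q : ℝ := α*r + a.re with hqdef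
    set t : ℝ := β*r + b.re with htdef
    set M : ℕ := ⌊q⌋₊ with hMdef
    set n : ℕ := ⌊t-1⌋₊ with hndef
    have hq0 : (0:ℝ) ≤ q := by linarith
    have hM1 : (M:ℝ) ≤ q := Nat.floor_le hq0
    have hM2 : q < M + 1 := Nat.lt_floor_add_one q
    have hn1 : (n:ℝ) ≤ t - 1 := Nat.floor_le (by linarith)
    have hn2 : t - 1 < n + 1 := Nat.lt_floor_add_one _
    -- numerator bound
    have hre : (((α*r:ℝ):ℂ) + a).re = q := by simp [hqdef]
    have hnum : ‖Complex.Gamma (((α*r:ℝ):ℂ) + a)‖ ≤ (M.factorial : ℝ) := by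
      calc ‖Complex.Gamma (((α*r:ℝ):ℂ) + a)‖ ≤ Real.Gamma ((((α*r:ℝ):ℂ) + a).re) :=
            my_norm_Gamma_le (by rw [hre]; linarith)
        _ = Real.Gamma q := by rw [hre]
        _ ≤ (M.factorial : ℝ) := my_Gamma_le_fact M q C1 hM2
    -- denominator bound
    set w : ℂ := ((β*r:ℝ):ℂ) + b - n with hwdef
    have hwim : w.im = b.im := by simp [hwdef]
    have hwre : w.re = t - n := by simp [hwdef, htdef]
    have h1w : 1 ≤ w.re := by rw [hwre]; linarith
    have h2w : w.re ≤ 2 := by rw [hwre]; linarith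
    have hwn : w + n = ((β*r:ℝ):ℂ) + b := by rw [hwdef]; ring
    have hden : c * (n.factorial : ℝ) ≤ ‖Complex.Gamma (((β*r:ℝ):ℂ) + b)‖ := by
      rw [← hwn]
      calc c * (n.factorial : ℝ) ≤ ‖Complex.Gamma w‖ * n.factorial :=
            mul_le_mul_of_nonneg_right (hcmin w hwim h1w h2w) (by positivity)
        _ = (n.factorial : ℝ) * ‖Complex.Gamma w‖ := mul_comm _ _
        _ ≤ ‖Complex.Gamma (w + n)‖ := my_Gamma_lower w h1w n
    have hdenpos : (0:ℝ) < c * n.factorial := by positivity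
    -- nat combinatorics
    have hMnr : M ≤ n + r := by
      have h1 : (M:ℝ) ≤ (n:ℝ) + r := by
        have : q ≤ (n:ℝ) + r := by
          have hr0 : (0:ℝ) ≤ (r:ℝ) := by positivity
          nlinarith [C3, hn2]
        linarith
      exact_mod_cast h1
    set d : ℕ := n + r - M with hddef
    have hdcast : (d:ℝ) = (n:ℝ) + r - M := by
      rw [hddef]; push_cast [Nat.cast_sub hMnr]; ring
    have hd : ((1+β-α)/2) * r ≤ (d:ℝ) := by
      rw [hdcast]
      nlinarith [C3, hn2, hM1]
    have hfact1 : (M.factorial : ℝ) * q^d ≤ ((2:ℝ))^(n+r) * n.factorial * r.factorial := by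
      have hq1 : q^d ≤ ((M:ℝ)+1)^d := pow_le_pow_left₀ hq0 hM2.le d
      have hnat : (M.factorial * (M+1)^d : ℕ) ≤ ((n+r).factorial : ℕ) := by
        have := my_fact_mul_pow_le M d
        rwa [show M + d = n + r by omega] at this
      have hnat2 := my_fact_add_le n r
      calc (M.factorial : ℝ) * q^d ≤ (M.factorial : ℝ) * ((M:ℝ)+1)^d :=
            mul_le_mul_of_nonneg_left hq1 (by positivity)
        _ = ((M.factorial * (M+1)^d : ℕ) : ℝ) := by push_cast; ring
        _ ≤ (((n+r).factorial : ℕ) : ℝ) := by exact_mod_cast hnat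
        _ ≤ ((2^(n+r) * n.factorial * r.factorial : ℕ) : ℝ) := by exact_mod_cast hnat2
        _ = ((2:ℝ))^(n+r) * n.factorial * r.factorial := by push_cast; ring
    -- now assemble
    have hterm : ‖Complex.Gamma ((α * r : ℝ) + a) / Complex.Gamma ((β * r : ℝ) + b) *
        z ^ r / (Nat.factorial r)‖ =
        ‖Complex.Gamma (((α*r:ℝ):ℂ) + a)‖ / ‖Complex.Gamma (((β*r:ℝ):ℂ) + b)‖
          * x^r / (r.factorial : ℝ) := by
      rw [norm_div, norm_mul, norm_div, norm_pow]
      simp [hxdef]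
    rw [hterm]
    have hqpow_pos : (0:ℝ) < q^d := by positivity
    have step1 : ‖Complex.Gamma (((α*r:ℝ):ℂ) + a)‖ / ‖Complex.Gamma (((β*r:ℝ):ℂ) + b)‖
          * x^r / (r.factorial : ℝ)
        ≤ ((M.factorial : ℝ) / (c * n.factorial)) * x^r / (r.factorial : ℝ) := by
      gcongr
      all_goals first
        | exact div_le_div (by positivity) hnum hdenpos hden
        | positivity
    refine step1.trans ?_
    have step2 : ((M.factorial : ℝ) / (c * n.factorial)) * x^r / (r.factorial : ℝ)
        ≤ (2:ℝ)^(n+r) * x^r / (c * q^d) := by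
      rw [div_le_div_iff₀ (by positivity) (by positivity)]
      have expand : (M.factorial : ℝ) / (c * n.factorial) * x ^ r * (c * q ^ d)
          = ((M.factorial : ℝ) * q^d) * x^r * (c / (c * n.factorial)) := by
        field_simp
      rw [expand]
      have hcc : c / (c * (n.factorial:ℝ)) = 1 / n.factorial := by
        field_simp
      rw [hcc]
      calc (M.factorial : ℝ) * q^d * x^r * (1 / n.factorial)
          ≤ ((2:ℝ)^(n+r) * n.factorial * r.factorial) * x^r * (1 / n.factorial) := by
            gcongr
        _ = (2:ℝ)^(n+r) * x^r * (r.factorial:ℝ) := by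
            field_simp
    refine step2.trans ?_
    -- final estimate
    have h2nr : ((2:ℝ))^(n+r) ≤ (2:ℝ)^(b.re) * ((2:ℝ)^(β+1:ℝ))^r := by
      have e1 : ((2:ℝ))^(n+r) = (2:ℝ) ^ (((n+r:ℕ)):ℝ) := by
        rw [Real.rpow_natCast]
      have e2 : (2:ℝ) ^ (((n+r:ℕ)):ℝ) ≤ (2:ℝ) ^ (b.re + (β+1)*r) := by
        apply Real.rpow_le_rpow_of_exponent_le one_le_two
        push_cast
        nlinarith [hn1]
      have e3 : (2:ℝ) ^ (b.re + (β+1)*r) = (2:ℝ)^(b.re) * ((2:ℝ)^(β+1:ℝ))^r := by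
        rw [Real.rpow_add two_pos, ← Real.rpow_natCast ((2:ℝ)^(β+1:ℝ)) r,
          ← Real.rpow_mul (by norm_num)]
      rw [e1, ← e3]; exact e2
    have hqd : ((q ^ ((1+β-α)/2) : ℝ))^r ≤ q^d := by
      have e1 : (q:ℝ)^d = q ^ ((d:ℕ):ℝ) := by rw [Real.rpow_natCast]
      have e2 : q ^ (((1+β-α)/2) * r) ≤ q ^ ((d:ℕ):ℝ) :=
        Real.rpow_le_rpow_of_exponent_le C1 hd
      have e3 : ((q ^ ((1+β-α)/2) : ℝ))^r = q ^ (((1+β-α)/2) * r) := by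
        rw [← Real.rpow_natCast (q ^ ((1+β-α)/2)) r, ← Real.rpow_mul (by linarith)]
      rw [e1, e3]; exact e2
    have hqk_pos : (0:ℝ) < q ^ ((1+β-α)/2) := Real.rpow_pos_of_pos (by linarith) _
    have step3 : (2:ℝ)^(n+r) * x^r / (c * q^d)
        ≤ ((2:ℝ)^(b.re) * ((2:ℝ)^(β+1:ℝ))^r) * x^r / (c * (q ^ ((1+β-α)/2))^r) := by
      gcongr <;> first
        | exact h2nr
        | exact hqd
        | positivity
    refine step3.trans ?_
    have final : ((2:ℝ)^(b.re) * ((2:ℝ)^(β+1:ℝ))^r) * x^r / (c * (q ^ ((1+β-α)/2))^r)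
        = (2:ℝ)^(b.re) / c * (((2:ℝ)^(β+1:ℝ) * x) / (q ^ ((1+β-α)/2)))^r := by
      rw [div_pow, mul_pow]
      field_simp
    rw [final]
    have h2b : (0:ℝ) < (2:ℝ)^(β+1:ℝ) := Real.rpow_pos_of_pos two_pos _
    have hratio : (2:ℝ)^(β+1:ℝ) * x / q ^ ((1+β-α)/2) ≤ 1/2 := by
      rw [div_le_iff₀ hqk_pos]
      nlinarith [C5]
    have hratio0 : (0:ℝ) ≤ (2:ℝ)^(β+1:ℝ) * x / q ^ ((1+β-α)/2) := by positivity
    exact mul_le_mul_of_nonneg_left (pow_le_pow_left₀ hratio0 hratio r) (by positivity)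
  -- conclude summability
  rw [← summable_nat_add_iff R]
  refine Summable.of_nonneg_of_le (fun m => norm_nonneg _) (fun m => ?_)
    (((summable_geometric_of_lt_one (by norm_num) (by norm_num)).mul_left
      ((2:ℝ)^(b.re) / c * (1/2)^R)) : Summable (fun m : ℕ => ((2:ℝ)^(b.re) / c * (1/2)^R) * (1/2)^m))
  have := key (m + R) (Nat.le_add_left R m)
  calc _ ≤ (2:ℝ)^(b.re) / c * (1/2)^(m+R) := this
    _ = ((2:ℝ)^(b.re) / c * (1/2)^R) * (1/2)^m := by rw [pow_add]; ring
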